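/- Let σ > 0 and ε > 0, and let a be a real number with √σ < a < 1/2. Then for every real R with R ≥ 2 and R ≥ (2/√σ) · log(2 + 2/ε), one has (4√2 / cosh(R)^{√σ/2}) · ∫_{0}^{R} cosh(a u) √(1 − cosh(u)/cosh(R)) du ≥ 1/ε. -/

import Mathlib

open Real intervalIntegral

set_option maxHeartbeats 1000000 in
/-- Part (3) of Lemma 4.4 in real-analytic form: for `σ > 0`, `ε > 0`, `√σ < a < 1/2`,
and `R ≥ max{2, (2/√σ) log(2 + 2/ε)}`, the Selberg transform value
`(4√2/cosh(R)^{√σ/2}) ∫₀^R cosh(au)√(1 − cosh(u)/cosh(R)) du` is at least `1/ε`. -/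
theorem stmt_17 (σ ε a : ℝ) (hσ : 0 < σ) (hε : 0 < ε)
    (ha1 : Real.sqrt σ < a) (ha2 : a < 1 / 2)
    (R : ℝ) (hR2 : 2 ≤ R) (hRlog : (2 / Real.sqrt σ) * Real.log (2 + 2 / ε) ≤ R) :
    1 / ε ≤ (4 * Real.sqrt 2 / Real.cosh R ^ (Real.sqrt σ / 2))
      * ∫ u in (0:ℝ)..R, Real.cosh (a * u) * Real.sqrt (1 - Real.cosh u / Real.cosh R) := by
  set s := Real.sqrt σ with hs
  have hs0 : 0 < s := Real.sqrt_pos.2 hσ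
  have hs2 : s < 1 / 2 := ha1.trans ha2
  set X := Real.exp (s * R / 2) with hXdef
  have hR0 : (0:ℝ) ≤ R := by linarith
  -- X ≥ 2 + 2/ε
  have hXε : 2 + 2 / ε ≤ X := by
    have h1 : Real.log (2 + 2 / ε) ≤ s * R / 2 := by
      have := hRlog
      rw [div_mul_eq_mul_div, div_le_iff₀ hs0] at this
      linarith
    calc 2 + 2 / ε = Real.exp (Real.log (2 + 2 / ε)) := by
          rw [Real.exp_log]; positivity
      _ ≤ X := Real.exp_le_exp.2 h1
  have hX2 : 2 ≤ X := by
    have : 0 < 2 / ε := by positivity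
    linarith
  have hX0 : 0 < X := by linarith
  -- cosh R ^ (s/2) ≤ X
  have hcoshR : 0 < Real.cosh R := (Real.cosh_pos R)
  have hcosh_le_exp : ∀ x : ℝ, 0 ≤ x → Real.cosh x ≤ Real.exp x := by
    intro x hx
    rw [Real.cosh_eq]
    have h1 : Real.exp (-x) ≤ Real.exp x := Real.exp_le_exp.2 (by linarith)
    linarith
  have hD : Real.cosh R ^ (s / 2) ≤ X := by
    calc Real.cosh R ^ (s / 2) ≤ Real.exp R ^ (s / 2) :=
          Real.rpow_le_rpow hcoshR.le (hcosh_le_exp R hR0) (by positivity)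
      _ = X := by rw [← Real.exp_mul, hXdef]; ring_nf
  have hD0 : 0 < Real.cosh R ^ (s / 2) := Real.rpow_pos_of_pos hcoshR _
  -- half exp lower bound for cosh
  have hcosh_ge : ∀ x : ℝ, Real.exp x / 2 ≤ Real.cosh x := by
    intro x; rw [Real.cosh_eq]
    have := Real.exp_pos (-x); linarith
  -- integrand nonneg on [0, R]
  set f : ℝ → ℝ := fun u => Real.cosh (a * u) * Real.sqrt (1 - Real.cosh u / Real.cosh R) with hf
  have hfc : Continuous f := by
    apply Continuous.mul (by continuity)
    exact Real.continuous_sqrt.comp (by continuity)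
  have hfnn : ∀ u, 0 ≤ f u := fun u => mul_nonneg (Real.cosh_pos _).le (Real.sqrt_nonneg _)
  -- step 1 : restrict to [0, R-2]
  have hstep1 : (∫ u in (0:ℝ)..(R - 2), f u) ≤ ∫ u in (0:ℝ)..R, f u := by
    apply intervalIntegral.integral_mono_interval le_rfl (by linarith) (by linarith)
    · exact Filter.Eventually.of_forall hfnn
    · exact (hfc.intervalIntegrable 0 R)
  -- step 2 : on [0, R-2], f u ≥ 0.85 * (exp (s*u) / 2)
  have he1 : Real.exp 1 < 2.7182818286 := Real.exp_one_lt_d9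
  have he1' : 2.7182818283 < Real.exp 1 := Real.exp_one_gt_d9
  have hstep2 : ∀ u ∈ Set.Icc (0:ℝ) (R - 2), 0.85 * (Real.exp (s * u) / 2) ≤ f u := by
    intro u hu
    obtain ⟨hu0, huR⟩ := hu
    have h1 : Real.exp (s * u) / 2 ≤ Real.cosh (a * u) := by
      calc Real.exp (s * u) / 2 ≤ Real.exp (a * u) / 2 := by
            have : s * u ≤ a * u := mul_le_mul_of_nonneg_right ha1.le hu0
            have := Real.exp_le_exp.2 this; linarith
        _ ≤ Real.cosh (a * u) := hcosh_ge _
    have h2 : (0.85 : ℝ) ≤ Real.sqrt (1 - Real.cosh u / Real.cosh R) := by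
      have hcu : Real.cosh u ≤ Real.exp u := hcosh_le_exp u hu0
      have hcR : Real.exp R / 2 ≤ Real.cosh R := hcosh_ge R
      have hratio : Real.cosh u / Real.cosh R ≤ 2 * Real.exp (u - R) := by
        rw [div_le_iff₀ hcoshR]
        calc Real.cosh u ≤ Real.exp u := hcu
          _ = 2 * Real.exp (u - R) * (Real.exp R / 2) := by
              rw [Real.exp_sub]; field_simp
          _ ≤ 2 * Real.exp (u - R) * Real.cosh R := by
              apply mul_le_mul_of_nonneg_left hcR (by positivity)
      have hexp2 : Real.exp (u - R) ≤ Real.exp (-2 : ℝ) := Real.exp_le_exp.2 (by linarith)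
      have hm1 : Real.exp (-1 : ℝ) ≤ 0.368 := by
        rw [Real.exp_neg, inv_le_comm₀ (Real.exp_pos 1) (by norm_num)]
        calc (0.368:ℝ)⁻¹ ≤ 2.7182818283 := by norm_num
          _ ≤ Real.exp 1 := he1'.le
      have hexpneg2 : Real.exp (-2 : ℝ) ≤ 0.136 := by
        rw [show (-2:ℝ) = -1 + -1 by norm_num, Real.exp_add]
        nlinarith [Real.exp_pos (-1:ℝ)]
      have hr : Real.cosh u / Real.cosh R ≤ 0.272 := by nlinarith
      have : (0.85:ℝ)^2 ≤ 1 - Real.cosh u / Real.cosh R := by norm_num; linarith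
      calc (0.85:ℝ) = Real.sqrt ((0.85:ℝ)^2) := by
            rw [Real.sqrt_sq]; norm_num
        _ ≤ _ := Real.sqrt_le_sqrt this
    calc 0.85 * (Real.exp (s * u) / 2) ≤ Real.sqrt (1 - Real.cosh u / Real.cosh R) * Real.cosh (a * u) := by
          apply mul_le_mul h2 h1 (by positivity) (Real.sqrt_nonneg _)
      _ = f u := by rw [hf]; ring
  -- step 3 : compute lower integral
  have hexpint : ∀ T : ℝ, (∫ u in (0:ℝ)..T, Real.exp (s * u)) = (Real.exp (s * T) - 1) / s := by
    intro T
    have hderiv : ∀ x ∈ Set.uIcc (0:ℝ) T,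
        HasDerivAt (fun u => Real.exp (s * u) / s) (Real.exp (s * x)) x := by
      intro x _
      have h1 : HasDerivAt (fun u : ℝ => s * u) s x := by
        simpa using (hasDerivAt_id x).const_mul s
      have h2 := h1.exp
      have h3 := h2.div_const s
      rw [mul_div_cancel_right₀ _ hs0.ne'] at h3
      exact h3
    rw [intervalIntegral.integral_eq_sub_of_hasDerivAt hderiv
      (((by continuity : Continuous (fun u : ℝ => Real.exp (s * u)))).intervalIntegrable 0 T)]
    simp
    ring
  have hstep3 : (0.85:ℝ) * ((Real.exp (s * (R - 2)) - 1) / s) / 2 ≤ ∫ u in (0:ℝ)..(R - 2), f u := by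
    have hmono : (∫ u in (0:ℝ)..(R-2), (0.85:ℝ)/2 * Real.exp (s * u)) ≤ ∫ u in (0:ℝ)..(R-2), f u :=
      intervalIntegral.integral_mono_on (by linarith : (0:ℝ) ≤ R - 2)
      (((by continuity : Continuous (fun u : ℝ => (0.85:ℝ)/2 * Real.exp (s * u)))).intervalIntegrable 0 (R-2))
      (hfc.intervalIntegrable 0 (R-2))
      (fun x hx => by
        have := hstep2 x hx
        show (0.85:ℝ)/2 * Real.exp (s * x) ≤ f x
        linarith)
    calc (0.85:ℝ) * ((Real.exp (s * (R - 2)) - 1) / s) / 2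
        = (0.85:ℝ)/2 * ∫ u in (0:ℝ)..(R-2), Real.exp (s * u) := by
          rw [hexpint]; ring
      _ = ∫ u in (0:ℝ)..(R-2), (0.85:ℝ)/2 * Real.exp (s * u) := by
          rw [intervalIntegral.integral_const_mul]
      _ ≤ _ := hmono
  -- assemble : exp(s(R-2)) = X^2 * exp(-2s) ≥ X^2 * 0.3678
  have hXsq : Real.exp (s * (R - 2)) = X ^ 2 * Real.exp (-(2 * s)) := by
    rw [hXdef, ← Real.exp_nat_mul, ← Real.exp_add]
    ring_nf
  have hexpm : (0.3678:ℝ) ≤ Real.exp (-(2 * s)) := by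
    have h1 : Real.exp (-1:ℝ) ≤ Real.exp (-(2 * s)) := Real.exp_le_exp.2 (by linarith)
    have h2 : (0.3678:ℝ) ≤ Real.exp (-1:ℝ) := by
      rw [Real.exp_neg]
      rw [le_inv_comm₀ (by norm_num) (Real.exp_pos 1)]
      exact le_trans he1.le (by norm_num)
    linarith
  have hIlow : (0.85:ℝ) * (0.3678 * X ^ 2 - 1) ≤ ∫ u in (0:ℝ)..R, f u := by
    have h1 : (0.85:ℝ) * (0.3678 * X ^ 2 - 1) ≤ (0.85:ℝ) * ((Real.exp (s * (R - 2)) - 1) / s) / 2 := by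
      have hsle : 1 / s ≥ 2 := by
        rw [ge_iff_le, le_div_iff₀ hs0]; linarith
      have hnum : 0.3678 * X ^ 2 - 1 ≤ Real.exp (s * (R - 2)) - 1 := by
        rw [hXsq]; nlinarith
      have hnum0 : (0:ℝ) ≤ 0.3678 * X ^ 2 - 1 := by nlinarith
      have : (0.3678 * X ^ 2 - 1) * 2 ≤ (Real.exp (s * (R - 2)) - 1) / s := by
        calc (0.3678 * X ^ 2 - 1) * 2 ≤ (0.3678 * X ^ 2 - 1) * (1 / s) := by
              apply mul_le_mul_of_nonneg_left hsle hnum0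
          _ ≤ (Real.exp (s * (R - 2)) - 1) * (1 / s) := by
              apply mul_le_mul_of_nonneg_right hnum (by positivity)
          _ = (Real.exp (s * (R - 2)) - 1) / s := by ring
      linarith
    linarith [hstep3, hstep1]
  -- final numeric step
  have hsqrt2 : (1.414:ℝ) ≤ Real.sqrt 2 := by
    rw [show (1.414:ℝ) = Real.sqrt (1.414^2) by rw [Real.sqrt_sq]; norm_num]
    exact Real.sqrt_le_sqrt (by norm_num)
  set I := ∫ u in (0:ℝ)..R, f u with hI
  have hI0 : (0:ℝ) ≤ I := by
    have : (0:ℝ) ≤ 0.85 * (0.3678 * X ^ 2 - 1) := by nlinarith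
    linarith
  have hmain : 4 * Real.sqrt 2 / X * I ≤ 4 * Real.sqrt 2 / Real.cosh R ^ (s / 2) * I := by
    apply mul_le_mul_of_nonneg_right _ hI0
    apply div_le_div_of_nonneg_left (by positivity) hD0 hD
  have hfinal : 1 / ε ≤ 4 * Real.sqrt 2 / X * I := by
    rw [div_mul_eq_mul_div, le_div_iff₀ hX0]
    have hεX : 1 / ε * X ≤ (X - 2) / 2 * X := by
      apply mul_le_mul_of_nonneg_right _ hX0.le
      rw [div_le_div_iff₀ hε (by norm_num)]
      have h2 : 2 / ε * ε = 2 := div_mul_cancel₀ 2 hε.ne'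
      nlinarith [mul_le_mul_of_nonneg_right hXε hε.le]
    have : (X - 2) / 2 * X ≤ 4 * Real.sqrt 2 * I := by
      nlinarith [hIlow, hsqrt2, hX2]
    linarith
  exact le_trans hfinal hmain
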